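/- (Proposition: sufficiency condition for RoLpAl.) Let N, L, m be integers with 1 ≤ L ≤ N, let A ∈ {0,1}^{m×N}, and let (z, λ1, λ2, ν) with z, λ1, λ2 ∈ ℝ^N, ν ∈ ℝ be a KKT point of LP0a for (A, L). Let Ŝ_L ⊆ {1,...,N} with |Ŝ_L| = L satisfy z(i) ≤ z(j) for every i ∈ Ŝ_L and j ∉ Ŝ_L (i.e. Ŝ_L indexes L smallest entries of z). Then λ2(i) = 0 for every i ∈ Ŝ_L; consequently, for any set S_d ⊆ {1,...,N}, if λ2(i) > 0 for all i ∈ S_d, then Ŝ_L ∩ S_d = ∅. -/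
import Mathlib


/-- A KKT point of the linear program **LP0a** for data `(A, L)`:
minimize `Σ_{l,k} A_{lk} z(k)` subject to `0 ≤ z(k) ≤ 1` for all `k` and
`Σ_k z(k) ≥ N−L`; `l1, l2, ν` are the dual variables of the constraints
`z ≥ 0`, `z ≤ 1` and `Σ_k z(k) ≥ N−L` respectively. -/
structure KKT0a (m N L : ℕ) (A : Fin m → Fin N → Bool)
    (z l1 l2 : Fin N → ℝ) (ν : ℝ) : Prop where
  grad : ∀ k, (∑ l : Fin m, (if A l k then (1 : ℝ) else 0)) - l1 k + l2 k - ν = 0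
  cs1 : ∀ k, l1 k * z k = 0
  cs2 : ∀ k, l2 k * (z k - 1) = 0
  csnu : ν * ((∑ k : Fin N, z k) - ((N : ℝ) - L)) = 0
  z_nonneg : ∀ k, 0 ≤ z k
  z_le_one : ∀ k, z k ≤ 1
  sum_z : (N : ℝ) - L ≤ ∑ k : Fin N, z k
  l1_nonneg : ∀ k, 0 ≤ l1 k
  l2_nonneg : ∀ k, 0 ≤ l2 k
  nu_nonneg : 0 ≤ ν

/-- sufficiency condition for RoLpAl: at a KKT point of LP0a, if `Ŝ_L`
indexes `L` smallest entries of `z`, then `λ2(i) = 0` for every `i ∈ Ŝ_L`;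
consequently, for any `S_d`, if `λ2(i) > 0` for all `i ∈ S_d`, then `Ŝ_L ∩ S_d = ∅`. -/
theorem stmt_11 (N L m : ℕ) (hL1 : 1 ≤ L) (hLN : L ≤ N)
    (A : Fin m → Fin N → Bool) (z l1 l2 : Fin N → ℝ) (ν : ℝ)
    (hKKT : KKT0a m N L A z l1 l2 ν)
    (SL : Finset (Fin N)) (hSL : SL.card = L)
    (hmin : ∀ i ∈ SL, ∀ j ∉ SL, z i ≤ z j) :
    (∀ i ∈ SL, l2 i = 0) ∧
      ∀ Sd : Finset (Fin N), (∀ i ∈ Sd, 0 < l2 i) → SL ∩ Sd = ∅ := by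
  have main : ∀ i ∈ SL, l2 i = 0 := by
    intro i hi
    by_contra hne
    -- z i = 1
    have hzi : z i = 1 := by
      have := hKKT.cs2 i
      have h := mul_eq_zero.mp this
      rcases h with h | h
      · exact absurd h hne
      · linarith
    -- every j ∉ SL has z j = 1
    have hout : ∀ j ∉ SL, z j = 1 := fun j hj =>
      le_antisymm (hKKT.z_le_one j) (hzi ▸ hmin i hi j hj)
    -- sum over complement = N - L
    have hcard : (SLᶜ : Finset (Fin N)).card = N - L := by
      simp [Finset.card_compl, hSL]
    have hsumc : ∑ k ∈ SLᶜ, z k = (N : ℝ) - L := by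
      rw [Finset.sum_congr rfl (fun j hj => hout j (Finset.mem_compl.mp hj))]
      rw [Finset.sum_const, hcard]
      rw [nsmul_eq_mul, mul_one, Nat.cast_sub hLN]
    have hsumSL : 1 ≤ ∑ k ∈ SL, z k := by
      calc (1:ℝ) = z i := hzi.symm
      _ ≤ ∑ k ∈ SL, z k := Finset.single_le_sum (fun k _ => hKKT.z_nonneg k) hi
    have hsplit : ∑ k : Fin N, z k = (∑ k ∈ SL, z k) + ∑ k ∈ SLᶜ, z k :=
      (Finset.sum_add_sum_compl SL z).symm
    have hgt : (N : ℝ) - L < ∑ k : Fin N, z k := by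
      rw [hsplit, hsumc]; linarith
    have hnu : ν = 0 := by
      have := hKKT.csnu
      rcases mul_eq_zero.mp this with h | h
      · exact h
      · linarith
    have hl1 : l1 i = 0 := by
      have := hKKT.cs1 i
      rcases mul_eq_zero.mp this with h | h
      · exact h
      · linarith
    have hA : (0:ℝ) ≤ ∑ l : Fin m, (if A l i then (1 : ℝ) else 0) :=
      Finset.sum_nonneg (fun l _ => by positivity)
    have hg := hKKT.grad i
    have : l2 i ≤ 0 := by rw [hnu, hl1] at hg; linarith
    exact hne (le_antisymm this (hKKT.l2_nonneg i))
  refine ⟨main, fun Sd hSd => ?_⟩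
  rw [Finset.eq_empty_iff_forall_notMem]
  intro x hx
  rw [Finset.mem_inter] at hx
  exact absurd (main x hx.1) (ne_of_gt (hSd x hx.2))
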